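/- For every positive integer n, the bivariate polynomial Sp_n(a,λ) has total degree n+1; its degree in the variable λ equals n+1, with leading coefficient (−1)^{n+1}; and its degree in the variable a equals ⌊(n+1)/2⌋. -/

import Mathlib

open MvPolynomial

/-- The matrix `M_n^{(a)} - λ·Id` with `a` and `λ` as indeterminates: an
`(n+1) × (n+1)` matrix over the polynomial ring `ℂ[a, λ]`, where `X 0 = a` and
`X 1 = λ`. -/
noncomputable def MmatMv (n : ℕ) : Matrix (Fin (n + 1)) (Fin (n + 1)) (MvPolynomial (Fin 2) ℂ) :=
  Matrix.of fun i j =>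
    if (j : ℕ) = (i : ℕ) + 1 then (((i : ℕ) + 1 : ℕ) : MvPolynomial (Fin 2) ℂ) * X 0
    else if (j : ℕ) = (i : ℕ) + 2 then
      ((((i : ℕ) + 1) * ((i : ℕ) + 2) : ℕ) : MvPolynomial (Fin 2) ℂ)
    else if (i : ℕ) = (j : ℕ) + 1 then ((n - (j : ℕ) : ℕ) : MvPolynomial (Fin 2) ℂ)
    else 0

/-- `Sp_n(a, λ) = det (M_n^{(a)} - λ·Id)` as a bivariate polynomial in `a = X 0`
and `λ = X 1`. -/
noncomputable def SpMv (n : ℕ) : MvPolynomial (Fin 2) ℂ :=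
  Matrix.det
    (MmatMv n - (X 1 : MvPolynomial (Fin 2) ℂ) •
      (1 : Matrix (Fin (n + 1)) (Fin (n + 1)) (MvPolynomial (Fin 2) ℂ)))

/-- The bivariate polynomial `Sp_n(a, λ)` has total degree `n+1`; its degree in `λ`
is `n+1` with coefficient of `λ^{n+1}` equal to `(-1)^{n+1}`; and its degree in `a`
is `⌊(n+1)/2⌋`. -/


noncomputable def bEnt (n s i j : ℕ) : MvPolynomial (Fin 2) ℂ :=
  if j = i + 1 then ((s + i + 1 : ℕ) : MvPolynomial (Fin 2) ℂ) * X 0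
  else if j = i + 2 then (((s + i + 1) * (s + i + 2) : ℕ) : MvPolynomial (Fin 2) ℂ)
  else if i = j + 1 then ((n - (s + j) : ℕ) : MvPolynomial (Fin 2) ℂ)
  else if i = j then -X 1
  else 0

noncomputable def Bmat (n s k : ℕ) : Matrix (Fin k) (Fin k) (MvPolynomial (Fin 2) ℂ) :=
  Matrix.of fun i j => bEnt n s (i : ℕ) (j : ℕ)

lemma Bmat_apply (n s k : ℕ) (i j : Fin k) : Bmat n s k i j = bEnt n s (i : ℕ) (j : ℕ) := rfl

lemma bEnt_shift (n s i j : ℕ) : bEnt n s (i+1) (j+1) = bEnt n (s+1) i j := by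
  unfold bEnt
  rw [show s + (i+1) = s+1+i by omega, show s + (j+1) = s+1+j by omega]
  split_ifs <;> first | omega | rfl

lemma SpMv_eq_det_Bmat (n : ℕ) : SpMv n = (Bmat n 0 (n+1)).det := by
  unfold SpMv
  congr 1
  refine Matrix.ext fun i j => ?_
  simp only [Matrix.sub_apply, Matrix.smul_apply, Matrix.one_apply, MmatMv, Bmat, bEnt,
    Matrix.of_apply, smul_eq_mul, Nat.zero_add, Nat.add_zero, Fin.ext_iff]
  set a := (i:ℕ) with ha
  set b := (j:ℕ) with hb
  clear_value a b
  split_ifs <;> first | ring1 | (push_cast; ring1) | (exfalso; omega)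


lemma det_expand_two {k : ℕ} (A : Matrix (Fin (k+2)) (Fin (k+2)) (MvPolynomial (Fin 2) ℂ))
    (h : ∀ i : Fin k, A i.succ.succ 0 = 0) :
    A.det = A 0 0 * (A.submatrix Fin.succ Fin.succ).det
      - A 1 0 * (A.submatrix (Fin.succAbove 1) Fin.succ).det := by
  rw [Matrix.det_succ_column_zero, Fin.sum_univ_succ, Fin.sum_univ_succ]
  have hz : ∀ i : Fin k,
      (-1 : MvPolynomial (Fin 2) ℂ) ^ ((i.succ.succ : Fin (k+2)) : ℕ) * A i.succ.succ 0 *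
        ((A.submatrix (Fin.succAbove i.succ.succ) Fin.succ).det) = 0 := by
    intro i; rw [h i]; ring
  rw [Finset.sum_congr rfl (fun i _ => hz i), Finset.sum_const, smul_zero]
  simp [Fin.succAbove_zero]
  ring

lemma bEnt_eq_zero {n s i j : ℕ} (h1 : j ≠ i+1) (h2 : j ≠ i+2) (h3 : i ≠ j+1) (h4 : i ≠ j) :
    bEnt n s i j = 0 := by
  unfold bEnt; split_ifs <;> first | rfl | omega

lemma bEnt00 (n s : ℕ) : bEnt n s 0 0 = -X 1 := by norm_num [bEnt]
lemma bEnt10 (n s : ℕ) : bEnt n s 1 0 = ((n - s : ℕ) : MvPolynomial (Fin 2) ℂ) := by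
  unfold bEnt; norm_num
lemma bEnt01 (n s : ℕ) : bEnt n s 0 1 = ((s + 1 : ℕ) : MvPolynomial (Fin 2) ℂ) * X 0 := by
  unfold bEnt; norm_num
lemma bEnt21 (n s : ℕ) : bEnt n s 2 1 = ((n - (s+1) : ℕ) : MvPolynomial (Fin 2) ℂ) := by
  unfold bEnt; norm_num
lemma bEnt02 (n s : ℕ) : bEnt n s 0 2 = (((s+1) * (s+2) : ℕ) : MvPolynomial (Fin 2) ℂ) := by
  unfold bEnt; norm_num
lemma bEnt32 (n s : ℕ) : bEnt n s 3 2 = ((n - (s+2) : ℕ) : MvPolynomial (Fin 2) ℂ) := by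
  unfold bEnt; norm_num

lemma succAbove_one_val {k : ℕ} (i : Fin (k+1)) :
    (((1 : Fin (k+2)).succAbove i) : ℕ) = if (i:ℕ) = 0 then 0 else (i:ℕ)+1 := by
  rw [Fin.succAbove]
  split_ifs with h1 h2 h2 <;> simp_all [Fin.lt_def, Fin.val_one] <;> omega

lemma Bmat_sub_succ (n s k : ℕ) :
    (Bmat n s (k+1)).submatrix Fin.succ Fin.succ = Bmat n (s+1) k := by
  refine Matrix.ext fun i j => ?_
  simp only [Matrix.submatrix_apply, Bmat_apply, Fin.val_succ]
  exact bEnt_shift n s i j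


lemma detD_formula (n s k : ℕ) :
    ((((Bmat n s (k+3)).submatrix (Fin.succAbove 1) Fin.succ).submatrix
        (Fin.succAbove 1) Fin.succ)).det
      = (((s+1) * (s+2) : ℕ) : MvPolynomial (Fin 2) ℂ) * (Bmat n (s+3) k).det := by
  cases k with
  | zero =>
    rw [Matrix.det_fin_one, Matrix.det_fin_zero, mul_one]
    simp only [Matrix.submatrix_apply, Bmat_apply, succAbove_one_val, Fin.val_succ, Fin.val_zero]
    norm_num
    rw [bEnt02]
    push_cast
    ring
  | succ k' =>
    have htailD : ∀ i : Fin k',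
        (((Bmat n s (k'+1+3)).submatrix (Fin.succAbove 1) Fin.succ).submatrix
          (Fin.succAbove 1) Fin.succ) i.succ.succ 0 = 0 := by
      intro i
      simp only [Matrix.submatrix_apply, Bmat_apply, succAbove_one_val, Fin.val_succ, Fin.val_zero]
      norm_num
      exact bEnt_eq_zero (by omega) (by omega) (by omega) (by omega)
    rw [det_expand_two _ htailD]
    have hD00 : (((Bmat n s (k'+1+3)).submatrix (Fin.succAbove 1) Fin.succ).submatrix
        (Fin.succAbove 1) Fin.succ) 0 0 = (((s+1) * (s+2) : ℕ) : MvPolynomial (Fin 2) ℂ) := by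
      simp only [Matrix.submatrix_apply, Bmat_apply, succAbove_one_val, Fin.val_succ, Fin.val_zero]
      norm_num
      rw [bEnt02]
      push_cast
      ring
    have hDsub : ((((Bmat n s (k'+1+3)).submatrix (Fin.succAbove 1) Fin.succ).submatrix
        (Fin.succAbove 1) Fin.succ).submatrix Fin.succ Fin.succ) = Bmat n (s+3) (k'+1) := by
      refine Matrix.ext fun i j => ?_
      simp only [Matrix.submatrix_apply, Bmat_apply, succAbove_one_val, Fin.val_succ]
      norm_num
      rw [show (i:ℕ) + 1 + 1 + 1 = ((i:ℕ) + 1 + 1) + 1 from rfl,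
        show (j:ℕ) + 1 + 1 + 1 = ((j:ℕ) + 1 + 1) + 1 from rfl, bEnt_shift,
        show (i:ℕ) + 1 + 1 = ((i:ℕ) + 1) + 1 from rfl,
        show (j:ℕ) + 1 + 1 = ((j:ℕ) + 1) + 1 from rfl, bEnt_shift, bEnt_shift]
    have hEdet : (((((Bmat n s (k'+1+3)).submatrix (Fin.succAbove 1) Fin.succ).submatrix
        (Fin.succAbove 1) Fin.succ)).submatrix (Fin.succAbove 1) Fin.succ).det = 0 := by
      refine Matrix.det_eq_zero_of_row_eq_zero 0 fun j => ?_
      simp only [Matrix.submatrix_apply, Bmat_apply, succAbove_one_val, Fin.val_succ, Fin.val_zero]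
      norm_num
      exact bEnt_eq_zero (by omega) (by omega) (by omega) (by omega)
    rw [hD00, hDsub, hEdet, mul_zero, sub_zero]

lemma det_Bmat_rec (n s k : ℕ) :
    (Bmat n s (k+3)).det =
      -(X 1 * (Bmat n (s+1) (k+2)).det)
      - ((n - s : ℕ) : MvPolynomial (Fin 2) ℂ) * ((s+1 : ℕ) : MvPolynomial (Fin 2) ℂ) *
          (X 0 * (Bmat n (s+2) (k+1)).det)
      + ((n - s : ℕ) : MvPolynomial (Fin 2) ℂ) * ((n - (s+1) : ℕ) : MvPolynomial (Fin 2) ℂ) *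
          (((s+1) * (s+2) : ℕ) : MvPolynomial (Fin 2) ℂ) *
          (Bmat n (s+3) k).det := by
  have htailB : ∀ i : Fin (k+1), Bmat n s (k+3) i.succ.succ 0 = 0 := by
    intro i
    simp only [Bmat_apply, Fin.val_succ, Fin.val_zero]
    exact bEnt_eq_zero (by omega) (by omega) (by omega) (by omega)
  rw [det_expand_two _ htailB]
  have hB00 : Bmat n s (k+3) 0 0 = -X 1 := by
    simp only [Bmat_apply, Fin.val_zero]; exact bEnt00 n s
  have hB10 : Bmat n s (k+3) 1 0 = ((n - s : ℕ) : MvPolynomial (Fin 2) ℂ) := by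
    simp only [Bmat_apply, Fin.val_zero, Fin.val_one]; exact bEnt10 n s
  have htailC : ∀ i : Fin k,
      ((Bmat n s (k+3)).submatrix (Fin.succAbove 1) Fin.succ) i.succ.succ 0 = 0 := by
    intro i
    simp only [Matrix.submatrix_apply, Bmat_apply, succAbove_one_val, Fin.val_succ, Fin.val_zero]
    norm_num
    exact bEnt_eq_zero (by omega) (by omega) (by omega) (by omega)
  rw [det_expand_two _ htailC]
  have hC00 : ((Bmat n s (k+3)).submatrix (Fin.succAbove 1) Fin.succ) 0 0
      = ((s + 1 : ℕ) : MvPolynomial (Fin 2) ℂ) * X 0 := by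
    simp only [Matrix.submatrix_apply, Bmat_apply, succAbove_one_val, Fin.val_succ, Fin.val_zero]
    norm_num
    rw [bEnt01]
    push_cast
    ring
  have hC10 : ((Bmat n s (k+3)).submatrix (Fin.succAbove 1) Fin.succ) 1 0
      = ((n - (s+1) : ℕ) : MvPolynomial (Fin 2) ℂ) := by
    simp only [Matrix.submatrix_apply, Bmat_apply, succAbove_one_val, Fin.val_succ, Fin.val_zero,
      Fin.val_one]
    norm_num
    rw [bEnt21]
  have hCsub : ((Bmat n s (k+3)).submatrix (Fin.succAbove 1) Fin.succ).submatrix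
      Fin.succ Fin.succ = Bmat n (s+2) (k+1) := by
    refine Matrix.ext fun i j => ?_
    simp only [Matrix.submatrix_apply, Bmat_apply, succAbove_one_val, Fin.val_succ]
    norm_num
    rw [show (i:ℕ) + 1 + 1 = ((i:ℕ) + 1) + 1 from rfl, show (j:ℕ) + 1 + 1 = ((j:ℕ) + 1) + 1 from rfl,
      bEnt_shift, bEnt_shift]
  rw [hB00, hB10, hC00, hC10, hCsub, Bmat_sub_succ, detD_formula]
  push_cast
  ring


noncomputable def Rdet (n m : ℕ) : MvPolynomial (Fin 2) ℂ := (Bmat n (n+1-m) m).det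

lemma Rdet_rec (n k : ℕ) (hm : k+3 ≤ n+1) :
    Rdet n (k+3) = -(X 1 * Rdet n (k+2))
      - (((k+2) * (n+1-(k+2)) : ℕ) : MvPolynomial (Fin 2) ℂ) * (X 0 * Rdet n (k+1))
      + (((k+2) * (k+1) * ((n+1-(k+2)) * (n+1-(k+1))) : ℕ) : MvPolynomial (Fin 2) ℂ) *
          Rdet n k := by
  have H := det_Bmat_rec n (n+1-(k+3)) k
  rw [show n-(n+1-(k+3)) = k+2 from by omega,
    show n-(n+1-(k+3)+1) = k+1 from by omega,
    show n+1-(k+3)+1 = n+1-(k+2) from by omega,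
    show n+1-(k+3)+2 = n+1-(k+1) from by omega,
    show n+1-(k+3)+3 = n+1-k from by omega] at H
  unfold Rdet
  rw [H]
  push_cast
  ring


lemma bEnt11 (n s : ℕ) : bEnt n s 1 1 = -X 1 := by unfold bEnt; norm_num

lemma Rdet_zero (n : ℕ) : Rdet n 0 = 1 := Matrix.det_fin_zero

lemma Rdet_one (n : ℕ) : Rdet n 1 = -X 1 := by
  unfold Rdet
  rw [Matrix.det_fin_one]
  simp only [Bmat_apply, Fin.val_zero]
  exact bEnt00 _ _

lemma Rdet_two (n : ℕ) (hn : 0 < n) :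
    Rdet n 2 = X 1 ^ 2 - ((n : ℕ) : MvPolynomial (Fin 2) ℂ) * X 0 := by
  unfold Rdet
  rw [Matrix.det_fin_two]
  simp only [Bmat_apply, Fin.val_zero, Fin.val_one]
  rw [bEnt00, bEnt11, bEnt01, bEnt10]
  rw [show n+1-2 = n-1 from by omega, show n-1+1 = n from by omega,
    show n-(n-1) = 1 from by omega]
  push_cast
  ring

lemma totalDegree_natCast' (c : ℕ) : ((c:ℕ) : MvPolynomial (Fin 2) ℂ).totalDegree = 0 := by
  rw [← map_natCast (MvPolynomial.C : ℂ →+* MvPolynomial (Fin 2) ℂ)]; exact totalDegree_C _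

lemma degreeOf_natCast' (c : ℕ) (i : Fin 2) :
    degreeOf i ((c:ℕ) : MvPolynomial (Fin 2) ℂ) = 0 := by
  rw [← map_natCast (MvPolynomial.C : ℂ →+* MvPolynomial (Fin 2) ℂ)]; exact degreeOf_C _ _

lemma coeff_natCast_mul' (c : ℕ) (d : Fin 2 →₀ ℕ) (p : MvPolynomial (Fin 2) ℂ) :
    coeff d (((c:ℕ) : MvPolynomial (Fin 2) ℂ) * p) = (c : ℂ) * coeff d p := by
  rw [← map_natCast (MvPolynomial.C : ℂ →+* MvPolynomial (Fin 2) ℂ), coeff_C_mul]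

lemma degreeOf_neg' (i : Fin 2) (p : MvPolynomial (Fin 2) ℂ) :
    degreeOf i (-p) = degreeOf i p := by
  simp [MvPolynomial.degreeOf_def]

lemma coeff_zero_of_degreeOf_lt {p : MvPolynomial (Fin 2) ℂ} {i : Fin 2} {d : Fin 2 →₀ ℕ}
    (h : degreeOf i p < d i) : coeff d p = 0 := by
  by_contra hne
  have := (MvPolynomial.degreeOf_le_iff (n := i) (f := p) (d := p.degreeOf i)).mp le_rfl d
    (mem_support_iff.mpr hne)
  omega

lemma le_degreeOf' {p : MvPolynomial (Fin 2) ℂ} {i : Fin 2} {d : Fin 2 →₀ ℕ}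
    (h : coeff d p ≠ 0) : d i ≤ degreeOf i p :=
  (MvPolynomial.degreeOf_le_iff (n := i) (f := p) (d := p.degreeOf i)).mp le_rfl d
    (mem_support_iff.mpr h)

lemma mu_sub_lam (d e : ℕ) :
    (Finsupp.single (0:Fin 2) d + Finsupp.single 1 e) - Finsupp.single 1 1
      = Finsupp.single (0:Fin 2) d + Finsupp.single 1 (e-1) := by
  ext x; fin_cases x <;> simp [Finsupp.single_apply]

lemma mu_sub_a (d e : ℕ) :
    (Finsupp.single (0:Fin 2) d + Finsupp.single 1 e) - Finsupp.single 0 1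
      = Finsupp.single (0:Fin 2) (d-1) + Finsupp.single 1 e := by
  ext x; fin_cases x <;> simp [Finsupp.single_apply]

lemma mem_mu_lam (d e : ℕ) :
    ((1:Fin 2) ∈ (Finsupp.single (0:Fin 2) d + Finsupp.single 1 e).support) ↔ e ≠ 0 := by
  simp [Finsupp.mem_support_iff, Finsupp.single_apply]

lemma mem_mu_a (d e : ℕ) :
    ((0:Fin 2) ∈ (Finsupp.single (0:Fin 2) d + Finsupp.single 1 e).support) ↔ d ≠ 0 := by
  simp [Finsupp.mem_support_iff, Finsupp.single_apply]

lemma mu_apply_a (d e : ℕ) : ((Finsupp.single (0:Fin 2) d + Finsupp.single 1 e : Fin 2 →₀ ℕ)) 0 = d := by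
  simp [Finsupp.single_apply]

lemma single_lam_eq_mu (e : ℕ) :
    Finsupp.single (1:Fin 2) e = Finsupp.single (0:Fin 2) 0 + Finsupp.single 1 e := by
  simp

lemma nu_sub_lam (e : ℕ) :
    Finsupp.single (1:Fin 2) e - Finsupp.single 1 1 = Finsupp.single (1:Fin 2) (e-1) := by
  ext x; fin_cases x <;> simp [Finsupp.single_apply]

lemma mem_nu_lam (e : ℕ) :
    ((1:Fin 2) ∈ (Finsupp.single (1:Fin 2) e).support) ↔ e ≠ 0 := by
  simp [Finsupp.mem_support_iff]

lemma not_mem_nu_a (e : ℕ) : ((0:Fin 2) ∉ (Finsupp.single (1:Fin 2) e).support) := by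
  simp [Finsupp.mem_support_iff, Finsupp.single_apply]

lemma degX11 : degreeOf (1:Fin 2) (X 1 : MvPolynomial (Fin 2) ℂ) = 1 := by
  rw [degreeOf_X]; norm_num

lemma degX01 : degreeOf (0:Fin 2) (X 1 : MvPolynomial (Fin 2) ℂ) = 0 := by
  rw [degreeOf_X]; norm_num [Fin.ext_iff]

lemma degX00 : degreeOf (0:Fin 2) (X 0 : MvPolynomial (Fin 2) ℂ) = 1 := by
  rw [degreeOf_X]; norm_num

lemma degX10 : degreeOf (1:Fin 2) (X 0 : MvPolynomial (Fin 2) ℂ) = 0 := by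
  rw [degreeOf_X]; norm_num [Fin.ext_iff]


lemma key (n : ℕ) (hn : 0 < n) : ∀ m : ℕ, m ≤ n+1 →
    (Rdet n m).totalDegree ≤ m ∧
    (Rdet n m).degreeOf 1 ≤ m ∧
    coeff (Finsupp.single 1 m) (Rdet n m) = (-1)^m ∧
    (Rdet n m).degreeOf 0 ≤ m/2 ∧
    ∃ c : ℝ, 0 < c ∧
      coeff (Finsupp.single 0 (m/2) + Finsupp.single 1 (m % 2)) (Rdet n m)
        = (-1)^((m+1)/2) * (c:ℂ) := by
  intro m
  induction m using Nat.strong_induction_on with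
  | _ m ih =>
  intro hm
  rcases lt_or_ge m 3 with h3 | h3
  · interval_cases m
    · -- m = 0
      rw [Rdet_zero]
      refine ⟨by rw [totalDegree_one], ?_, ?_, ?_, 1, one_pos, ?_⟩
      · have h1 : (1 : MvPolynomial (Fin 2) ℂ) = C 1 := C_1.symm
        rw [h1, degreeOf_C]
      · simp
      · have h1 : (1 : MvPolynomial (Fin 2) ℂ) = C 1 := C_1.symm
        rw [h1, degreeOf_C]
      · norm_num
    · -- m = 1
      rw [Rdet_one]
      refine ⟨?_, ?_, ?_, ?_, 1, one_pos, ?_⟩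
      · rw [totalDegree_neg, totalDegree_X]
      · rw [degreeOf_neg', degX11]
      · simp [coeff_neg, coeff_X']
      · rw [degreeOf_neg', degX01]
      · norm_num [coeff_neg, coeff_X']
    · -- m = 2
      rw [Rdet_two n hn]
      refine ⟨?_, ?_, ?_, ?_, (n:ℝ), by exact_mod_cast hn, ?_⟩
      · rw [sub_eq_add_neg]
        refine le_trans (totalDegree_add _ _) (sup_le ?_ ?_)
        · rw [totalDegree_X_pow]
        · rw [totalDegree_neg]
          refine le_trans (totalDegree_mul _ _) ?_
          rw [totalDegree_natCast', totalDegree_X]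
          omega
      · rw [sub_eq_add_neg]
        refine le_trans (degreeOf_add_le _ _ _) (sup_le ?_ ?_)
        · rw [sq]
          refine le_trans (degreeOf_mul_le _ _ _) ?_
          rw [degX11]
        · rw [degreeOf_neg']
          refine le_trans (degreeOf_mul_le _ _ _) ?_
          rw [degreeOf_natCast', degX10]
          norm_num
      · rw [coeff_sub, coeff_X_pow, coeff_natCast_mul', coeff_X']
        rw [if_pos rfl, if_neg (by
          simp only [Finsupp.single_eq_single_iff]
          push_neg
          constructor
          · intro h; exact absurd h (by decide)
          · intro h; omega)]
        norm_num
      · rw [sub_eq_add_neg]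
        refine le_trans (degreeOf_add_le _ _ _) (sup_le ?_ ?_)
        · rw [sq]
          refine le_trans (degreeOf_mul_le _ _ _) ?_
          rw [degX01]
          norm_num
        · rw [degreeOf_neg']
          refine le_trans (degreeOf_mul_le _ _ _) ?_
          rw [degreeOf_natCast', degX00]
      · rw [show (2:ℕ)/2 = 1 from rfl, show (2:ℕ)%2 = 0 from rfl]
        rw [coeff_sub, coeff_X_pow, coeff_natCast_mul', coeff_X']
        rw [if_neg (by
          simp only [Finsupp.single_zero, add_zero, Finsupp.single_eq_single_iff]
          push_neg
          constructor
          · intro h; exact absurd h (by decide)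
          · intro h; omega)]
        rw [if_pos (by simp)]
        push_cast
        ring
  · obtain ⟨k, rfl⟩ : ∃ k, m = k+3 := ⟨m-3, by omega⟩
    have hrec := Rdet_rec n k (by omega)
    obtain ⟨T1, D1, L1, A1, c1r, hc1pos, hc1⟩ := ih (k+2) (by omega) (by omega)
    obtain ⟨T2, D2, L2, A2, c2r, hc2pos, hc2⟩ := ih (k+1) (by omega) (by omega)
    obtain ⟨T3, D3, L3, A3, _, _, _⟩ := ih k (by omega) (by omega)
    set q1 : ℕ := (k+2) * (n+1-(k+2)) with hq1
    set q2 : ℕ := (k+2) * (k+1) * ((n+1-(k+2)) * (n+1-(k+1))) with hq2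
    refine ⟨?_, ?_, ?_, ?_, ?_⟩
    · -- totalDegree ≤ k+3
      rw [hrec, sub_eq_add_neg]
      refine le_trans (totalDegree_add _ _)
        (sup_le (le_trans (totalDegree_add _ _) (sup_le ?_ ?_)) ?_)
      · rw [totalDegree_neg]
        refine le_trans (totalDegree_mul _ _) ?_
        rw [totalDegree_X]
        omega
      · rw [totalDegree_neg]
        refine le_trans (totalDegree_mul _ _) ?_
        rw [totalDegree_natCast']
        have := totalDegree_mul (X 0 : MvPolynomial (Fin 2) ℂ) (Rdet n (k+1))
        rw [totalDegree_X] at this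
        omega
      · refine le_trans (totalDegree_mul _ _) ?_
        rw [totalDegree_natCast']
        omega
    · -- degreeOf 1 ≤ k+3
      rw [hrec, sub_eq_add_neg]
      refine le_trans (degreeOf_add_le _ _ _)
        (sup_le (le_trans (degreeOf_add_le _ _ _) (sup_le ?_ ?_)) ?_)
      · rw [degreeOf_neg']
        refine le_trans (degreeOf_mul_le _ _ _) ?_
        rw [degX11]
        omega
      · rw [degreeOf_neg']
        refine le_trans (degreeOf_mul_le _ _ _) ?_
        rw [degreeOf_natCast']
        have := degreeOf_mul_le (1 : Fin 2) (X 0 : MvPolynomial (Fin 2) ℂ) (Rdet n (k+1))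
        rw [degX10] at this
        omega
      · refine le_trans (degreeOf_mul_le _ _ _) ?_
        rw [degreeOf_natCast']
        omega
    · -- lambda-leading coeff
      rw [hrec, coeff_add, coeff_sub, coeff_neg]
      have hA : coeff (Finsupp.single 1 (k+3)) (X 1 * Rdet n (k+2)) = (-1)^(k+2) := by
        rw [mul_comm (X 1) (Rdet n (k+2)), coeff_mul_X', if_pos (by rw [mem_nu_lam]; omega),
          nu_sub_lam, show k+3-1 = k+2 from rfl, L1]
      have hB : coeff (Finsupp.single 1 (k+3))
          (((q1:ℕ) : MvPolynomial (Fin 2) ℂ) * (X 0 * Rdet n (k+1))) = 0 := by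
        rw [coeff_natCast_mul', mul_comm (X 0), coeff_mul_X', if_neg (not_mem_nu_a _), mul_zero]
      have hC : coeff (Finsupp.single 1 (k+3)) (Rdet n k) = 0 := by
        refine coeff_zero_of_degreeOf_lt (i := 1) ?_
        rw [Finsupp.single_eq_same]
        omega
      rw [hA, hB, coeff_natCast_mul', hC]
      ring
    · -- degreeOf 0 ≤ (k+3)/2
      rw [hrec, sub_eq_add_neg]
      refine le_trans (degreeOf_add_le _ _ _)
        (sup_le (le_trans (degreeOf_add_le _ _ _) (sup_le ?_ ?_)) ?_)
      · rw [degreeOf_neg']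
        refine le_trans (degreeOf_mul_le _ _ _) ?_
        rw [degX01]
        omega
      · rw [degreeOf_neg']
        refine le_trans (degreeOf_mul_le _ _ _) ?_
        rw [degreeOf_natCast']
        have := degreeOf_mul_le (0 : Fin 2) (X 0 : MvPolynomial (Fin 2) ℂ) (Rdet n (k+1))
        rw [degX00] at this
        omega
      · refine le_trans (degreeOf_mul_le _ _ _) ?_
        rw [degreeOf_natCast']
        omega
    · -- a-leading coeff
      have hC : coeff (Finsupp.single 0 ((k+3)/2) + Finsupp.single 1 ((k+3) % 2))
          (Rdet n k) = 0 := by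
        refine coeff_zero_of_degreeOf_lt (i := 0) ?_
        rw [mu_apply_a]
        omega
      have hB : coeff (Finsupp.single 0 ((k+3)/2) + Finsupp.single 1 ((k+3) % 2))
          (((q1:ℕ) : MvPolynomial (Fin 2) ℂ) * (X 0 * Rdet n (k+1)))
          = (q1 : ℂ) * ((-1)^((k+2)/2) * (c2r : ℂ)) := by
        rw [coeff_natCast_mul', mul_comm (X 0), coeff_mul_X',
          if_pos (by rw [mem_mu_a]; omega), mu_sub_a,
          show (k+3)/2 - 1 = (k+1)/2 from by omega,
          show (k+3) % 2 = (k+1) % 2 from by omega, hc2]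
      have hq1pos : 0 < q1 := by
        rw [hq1]
        have : 0 < n+1-(k+2) := by omega
        positivity
      rcases Nat.even_or_odd k with ⟨t, rfl⟩ | ⟨t, rfl⟩
      · -- k = 2t (k even): term A contributes too
        have hA : coeff (Finsupp.single 0 ((t+t+3)/2) + Finsupp.single 1 ((t+t+3) % 2))
            (X 1 * Rdet n (t+t+2)) = (-1)^((t+t+3)/2) * (c1r : ℂ) := by
          rw [mul_comm (X 1) (Rdet n (t+t+2)), coeff_mul_X', if_pos (by rw [mem_mu_lam]; omega), mu_sub_lam,
            show (t+t+3) % 2 - 1 = (t+t+2) % 2 from by omega,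
            show (t+t+3)/2 = (t+t+2)/2 from by omega]
          rw [hc1, show (t+t+2+1)/2 = (t+t+2)/2 from by omega]
        refine ⟨c1r + (q1 : ℝ) * c2r, by positivity, ?_⟩
        rw [hrec, coeff_add, coeff_sub, coeff_neg, hA, hB, coeff_natCast_mul', hC]
        rw [show (t+t+3)/2 = t+1 from by omega, show (t+t+2)/2 = t+1 from by omega,
          show (t+t+3+1)/2 = t+2 from by omega]
        push_cast
        ring
      · -- k = 2t+1 (k odd): term A vanishes
        have hA : coeff (Finsupp.single 0 ((2*t+1+3)/2) + Finsupp.single 1 ((2*t+1+3) % 2))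
            (X 1 * Rdet n (2*t+1+2)) = 0 := by
          rw [mul_comm (X 1) (Rdet n (2*t+1+2)), coeff_mul_X', if_neg (by rw [mem_mu_lam]; omega)]
        refine ⟨(q1 : ℝ) * c2r, by positivity, ?_⟩
        rw [hrec, coeff_add, coeff_sub, coeff_neg, hA, hB, coeff_natCast_mul', hC]
        rw [show (2*t+1+2)/2 = t+1 from by omega, show (2*t+1+3+1)/2 = t+2 from by omega]
        push_cast
        ring

theorem SpMv_degrees (n : ℕ) (hn : 0 < n) :
    (SpMv n).totalDegree = n + 1 ∧
    (SpMv n).degreeOf 1 = n + 1 ∧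
    MvPolynomial.coeff (Finsupp.single 1 (n + 1)) (SpMv n) = (-1) ^ (n + 1) ∧
    (SpMv n).degreeOf 0 = (n + 1) / 2 := by
  have hR : SpMv n = Rdet n (n+1) := by
    rw [SpMv_eq_det_Bmat]; unfold Rdet; rw [Nat.sub_self]
  obtain ⟨T, D, L, A, c, hcpos, hlead⟩ := key n hn (n+1) le_rfl
  rw [hR]
  have hL1 : coeff (Finsupp.single 1 (n+1)) (Rdet n (n+1)) ≠ 0 := by
    rw [L]; exact pow_ne_zero _ (by norm_num)
  have hD1 : n+1 ≤ degreeOf 1 (Rdet n (n+1)) := by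
    have h := le_degreeOf' (i := 1) hL1
    rwa [Finsupp.single_eq_same] at h
  have hA1 : (n+1)/2 ≤ degreeOf 0 (Rdet n (n+1)) := by
    have hne : coeff (Finsupp.single 0 ((n+1)/2) + Finsupp.single 1 ((n+1)%2))
        (Rdet n (n+1)) ≠ 0 := by
      rw [hlead]
      refine mul_ne_zero (pow_ne_zero _ (by norm_num)) ?_
      exact_mod_cast ne_of_gt hcpos
    have h := le_degreeOf' (i := 0) hne
    rwa [mu_apply_a] at h
  refine ⟨le_antisymm T ?_, le_antisymm D hD1, L, le_antisymm A hA1⟩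
  exact le_trans hD1 (degreeOf_le_totalDegree _ 1)
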